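/- Suppose A N = N. Let C := {X ∈ V : g(X,N) = 0, g(X,ξ) = 0}, T_λ := {X ∈ C : A X = X}, T_μ := {X ∈ C : A X = -X}, T := {Y ∈ V : g(Y,N) = 0}, let α, λ ∈ ℝ, and let S : T → T be the real-linear map with Sξ = αξ, S X = λX for X ∈ T_λ and S X = 0 for X ∈ T_μ. For X ∈ C define R_X : T → T by R_X Y := g(X,X)Y - g(X,Y)X + 3g(J X,Y)J X + g(A X,X)A Y - g(A X,Y)A X + g(J A X, X)J A Y + g(A J X, Y)J A X + g(S X,X)S Y - g(S X,Y)S X, and define R̄_N : T → T by R̄_N Y := Y + 2η(Y)ξ + A Y with η(Y) := g(Y,ξ). Then for every X ∈ T_λ ∪ T_μ, R̄_N ∘ R_X = R_X ∘ R̄_N. -/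

import Mathlib

noncomputable section

variable {V : Type*}

/-- The real inner product `g(x,y) = Re⟨x,y⟩` induced by the Hermitian inner product. -/
def g [NormedAddCommGroup V] [InnerProductSpace ℂ V] (x y : V) : ℝ := (inner ℂ x y : ℂ).re

/-- The Jacobi operator `R_X` of the type-B tube, obtained from the Gauss equation. -/
def RXop [NormedAddCommGroup V] [InnerProductSpace ℂ V]
    (A S : V →ₗ[ℝ] V) (X Y : V) : V :=
  g X X • Y - g X Y • X + (3 * g (Complex.I • X) Y) • (Complex.I • X)
    + g (A X) X • A Y - g (A X) Y • A X
    + g (Complex.I • A X) X • (Complex.I • A Y)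
    + g (A (Complex.I • X)) Y • (Complex.I • A X)
    + g (S X) X • S Y - g (S X) Y • S X

/-- The normal Jacobi operator of an 𝔄-principal hypersurface:
`R̄_N Y = Y + 2η(Y)ξ + AY`. -/
def RNop [NormedAddCommGroup V] [InnerProductSpace ℂ V]
    (A : V →ₗ[ℝ] V) (ξ Y : V) : V :=
  Y + (2 * g Y ξ) • ξ + A Y

section glemmas
variable [NormedAddCommGroup V] [InnerProductSpace ℂ V]

lemma g_symm (x y : V) : g x y = g y x := by
  simp only [g, ← inner_conj_symm x y, Complex.conj_re]
lemma g_add_left (x y z : V) : g (x + y) z = g x z + g y z := by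
  simp [g, inner_add_left]
lemma g_add_right (x y z : V) : g x (y + z) = g x y + g x z := by
  simp [g, inner_add_right]
lemma g_smul_left (r : ℝ) (x y : V) : g (r • x) y = r * g x y := by
  rw [g, RCLike.real_smul_eq_coe_smul (K := ℂ), inner_smul_left]
  simp [g, Complex.re_ofReal_mul]
lemma g_smul_right (r : ℝ) (x y : V) : g x (r • y) = r * g x y := by
  rw [g, RCLike.real_smul_eq_coe_smul (K := ℂ), inner_smul_right]
  simp [g, Complex.re_ofReal_mul]
lemma g_neg_left (x y : V) : g (-x) y = - g x y := by simp [g, inner_neg_left]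
lemma g_neg_right (x y : V) : g x (-y) = - g x y := by simp [g, inner_neg_right]
lemma g_sub_left (x y z : V) : g (x - y) z = g x z - g y z := by simp [g, inner_sub_left]
lemma g_sub_right (x y z : V) : g x (y - z) = g x y - g x z := by simp [g, inner_sub_right]
lemma g_I_I (x y : V) : g (Complex.I • x) (Complex.I • y) = g x y := by
  simp [g, inner_smul_left, inner_smul_right, ← mul_assoc, Complex.conj_I]
lemma g_I_left (x y : V) : g (Complex.I • x) y = - g x (Complex.I • y) := by
  simp [g, inner_smul_left, inner_smul_right, Complex.conj_I]
lemma g_I_self (x : V) : g (Complex.I • x) x = 0 := by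
  simp [g, inner_smul_left, Complex.conj_I, inner_self_eq_norm_sq_to_K (𝕜 := ℂ), ← Complex.ofReal_pow]
lemma g_zero_left (y : V) : g 0 y = 0 := by simp [g]
lemma g_zero_right (y : V) : g y 0 = 0 := by simp [g]
lemma g_self (x : V) : g x x = ‖x‖ ^ 2 := by
  simp [g, inner_self_eq_norm_sq_to_K (𝕜 := ℂ), ← Complex.ofReal_pow]

end glemmas

/-- For the type-B tube model (`AN = N`, shape operator `S` with `Sξ = αξ`, `S = λ·id` on
`T_λ = {X ∈ C : AX = X}`, `S = 0` on `T_μ = {X ∈ C : AX = -X}`), the normal Jacobi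
operator commutes with the Jacobi operator `R_X` for every `X ∈ T_λ ∪ T_μ`. -/
theorem stmt_17 [NormedAddCommGroup V] [InnerProductSpace ℂ V]
    (A : V →ₗ[ℝ] V)
    (hA_invol : ∀ x, A (A x) = x)
    (hA_antiJ : ∀ x, A (Complex.I • x) = -(Complex.I • A x))
    (hA_herm : ∀ x y, (inner ℂ (A x) (A y) : ℂ) = inner ℂ y x)
    (N : V) (hN : ‖N‖ = 1)
    (ξ : V) (hξ : ξ = -(Complex.I • N))
    (hAN : A N = N)
    (α lam : ℝ) (S : V →ₗ[ℝ] V)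
    (hS_tan : ∀ Y : V, g Y N = 0 → g (S Y) N = 0)
    (hSξ : S ξ = α • ξ)
    (hSlam : ∀ X : V, g X N = 0 → g X ξ = 0 → A X = X → S X = lam • X)
    (hSmu : ∀ X : V, g X N = 0 → g X ξ = 0 → A X = -X → S X = 0) :
    ∀ X : V, g X N = 0 → g X ξ = 0 → (A X = X ∨ A X = -X) →
      ∀ Y : V, g Y N = 0 →
        RNop A ξ (RXop A S X Y) = RXop A S X (RNop A ξ Y) := by
  -- adjointness of A with respect to g
  have hAdj : ∀ x y : V, g (A x) y = g x (A y) := by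
    intro x y
    have h1 : g (A x) (A (A y)) = g (A y) x := by
      unfold g; rw [hA_herm]
    rw [hA_invol] at h1
    rw [h1, g_symm]
  have hNN : g N N = 1 := by rw [g_self, hN]; norm_num
  have hξN : g ξ N = 0 := by rw [hξ, g_neg_left, g_I_self, neg_zero]
  have hξξ : g ξ ξ = 1 := by rw [hξ, g_neg_left, g_neg_right, g_I_I, hNN]; norm_num
  have hAξ : A ξ = -ξ := by
    rw [hξ, map_neg, hA_antiJ, hAN, neg_neg]
  -- S is determined on the tangent space
  have hSf : ∀ Z : V, g Z N = 0 → S Z = (α * g Z ξ) • ξ + (lam / 2) • (Z + A Z) := by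
    intro Z hZN
    have hAZN : g (A Z) N = 0 := by rw [hAdj, hAN]; exact hZN
    have hAZξ : g (A Z) ξ = -(g Z ξ) := by rw [hAdj, hAξ, g_neg_right]
    have hP : S ((1/2 : ℝ) • (Z + A Z)) = lam • ((1/2 : ℝ) • (Z + A Z)) := by
      apply hSlam
      · rw [g_smul_left, g_add_left, hZN, hAZN]; ring
      · rw [g_smul_left, g_add_left, hAZξ]; ring
      · rw [map_smul, map_add, hA_invol, add_comm]
    have hM : S (Z - g Z ξ • ξ - (1/2 : ℝ) • (Z + A Z)) = 0 := by
      apply hSmu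
      · rw [g_sub_left, g_sub_left, g_smul_left, g_smul_left, g_add_left,
          hZN, hAZN, hξN]; ring
      · rw [g_sub_left, g_sub_left, g_smul_left, g_smul_left, g_add_left,
          hξξ, hAZξ]; ring
      · rw [map_sub, map_sub, map_smul, map_smul, map_add, hA_invol, hAξ]
        module
    have key : Z = g Z ξ • ξ + (1/2 : ℝ) • (Z + A Z) +
        (Z - g Z ξ • ξ - (1/2 : ℝ) • (Z + A Z)) := by abel
    calc S Z = S (g Z ξ • ξ + (1/2 : ℝ) • (Z + A Z) +
        (Z - g Z ξ • ξ - (1/2 : ℝ) • (Z + A Z))) := by rw [← key]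
      _ = g Z ξ • S ξ + S ((1/2 : ℝ) • (Z + A Z)) +
          S (Z - g Z ξ • ξ - (1/2 : ℝ) • (Z + A Z)) := by
            rw [map_add, map_add, map_smul]
      _ = (α * g Z ξ) • ξ + (lam / 2) • (Z + A Z) := by
            rw [hSξ, hP, hM, smul_smul, add_zero]; module
  intro X hXN hXξ hAX Y hYN
  have hAYN : g (A Y) N = 0 := by rw [hAdj, hAN]; exact hYN
  have hAYξ : g (A Y) ξ = -(g Y ξ) := by rw [hAdj, hAξ, g_neg_right]
  have hIXξ : g (Complex.I • X) ξ = 0 := by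
    rw [hξ, g_neg_right, g_I_I, hXN, neg_zero]
  have hIXX : g (Complex.I • X) X = 0 := g_I_self X
  have hXIX : g X (Complex.I • X) = 0 := by rw [g_symm]; exact g_I_self X
  have hZN : g (Y + (2 * g Y ξ) • ξ + A Y) N = 0 := by
    rw [g_add_left, g_add_left, g_smul_left, hYN, hξN, hAYN]; ring
  have hSY := hSf Y hYN
  have hSZ := hSf _ hZN
  rcases hAX with h | h
  · have hAIX : A (Complex.I • X) = -(Complex.I • X) := by rw [hA_antiJ, h]
    have hXAY : g X (A Y) = g X Y := by rw [← hAdj, h]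
    have hIXAY : g (Complex.I • X) (A Y) = -(g (Complex.I • X) Y) := by
      rw [← hAdj, hAIX, g_neg_left]
    have hSX : S X = lam • X := hSlam X hXN hXξ h
    simp only [RXop, RNop, hSX, hSY, hSZ, h, hAIX, map_add, map_sub, map_smul,
      map_neg, map_zero, hA_invol, hAξ, hA_antiJ, smul_add, smul_sub, smul_neg,
      smul_zero, zero_smul, neg_smul, smul_smul,
      g_add_left, g_add_right, g_sub_left, g_sub_right, g_smul_left, g_smul_right,
      g_neg_left, g_neg_right, hXξ, hξN, hIXξ, hIXX, hXIX, hξξ, hXAY, hIXAY, hAYξ, g_zero_left, g_zero_right]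
    module
  · have hAIX : A (Complex.I • X) = Complex.I • X := by rw [hA_antiJ, h]; simp
    have hXAY : g X (A Y) = -(g X Y) := by rw [← hAdj, h, g_neg_left]
    have hIXAY : g (Complex.I • X) (A Y) = g (Complex.I • X) Y := by
      rw [← hAdj, hAIX]
    have hSX : S X = 0 := hSmu X hXN hXξ h
    simp only [RXop, RNop, hSX, hSY, hSZ, h, hAIX, map_add, map_sub, map_smul,
      map_neg, map_zero, hA_invol, hAξ, hA_antiJ, smul_add, smul_sub, smul_neg,
      smul_zero, zero_smul, neg_smul, smul_smul,
      g_add_left, g_add_right, g_sub_left, g_sub_right, g_smul_left, g_smul_right,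
      g_neg_left, g_neg_right, hXξ, hξN, hIXξ, hIXX, hXIX, hξξ, hXAY, hIXAY, hAYξ, g_zero_left, g_zero_right]
    module
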